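/- Let (P_s)_{s∈S} be a finite family of Hermitian projection matrices with P_s P_t = 0 for s ≠ t and Σ_s P_s = P, and let (𝓔_s)_{s∈S} be pairwise distinct real numbers with P H P = Σ_s 𝓔_s P_s. Then a dark state exists (i.e. there is a density matrix ρ with L(ρ) = 0 and ρ = PρP) if and only if there exist s ∈ S and a nonzero vector ψ with P_s ψ = ψ and Q H ψ = 0; in that case (ψψᴴ)/‖ψ‖² is a (pure) dark state. -/

import Mathlib

open Matrix Complex BigOperators ComplexOrder

/-- Projection onto the ground-state indices. -/
noncomputable def Pg (Ng Ne : ℕ) : Matrix (Fin Ng ⊕ Fin Ne) (Fin Ng ⊕ Fin Ne) ℂ :=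
  Matrix.diagonal (Sum.elim (fun _ => 1) (fun _ => 0))

/-- Projection onto the excited-state indices. -/
noncomputable def Qe (Ng Ne : ℕ) : Matrix (Fin Ng ⊕ Fin Ne) (Fin Ng ⊕ Fin Ne) ℂ :=
  1 - Pg Ng Ne

/-- Jump operator |g_i⟩⟨e_j|. -/
noncomputable def jump (Ng Ne : ℕ) (i : Fin Ng) (j : Fin Ne) :
    Matrix (Fin Ng ⊕ Fin Ne) (Fin Ng ⊕ Fin Ne) ℂ :=
  Matrix.single (Sum.inl i) (Sum.inr j) 1

/-- Decay operator Γ = Σ γ_{ij} σ_{ij}ᴴ σ_{ij}. -/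
noncomputable def Gam (Ng Ne : ℕ) (γ : Fin Ng → Fin Ne → ℝ) :
    Matrix (Fin Ng ⊕ Fin Ne) (Fin Ng ⊕ Fin Ne) ℂ :=
  ∑ i, ∑ j, (γ i j : ℂ) • ((jump Ng Ne i j)ᴴ * jump Ng Ne i j)

/-- The Lindblad generator. -/
noncomputable def Lindblad (Ng Ne : ℕ) (H : Matrix (Fin Ng ⊕ Fin Ne) (Fin Ng ⊕ Fin Ne) ℂ)
    (γ : Fin Ng → Fin Ne → ℝ) (ρ : Matrix (Fin Ng ⊕ Fin Ne) (Fin Ng ⊕ Fin Ne) ℂ) :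
    Matrix (Fin Ng ⊕ Fin Ne) (Fin Ng ⊕ Fin Ne) ℂ :=
  (-Complex.I) • (H * ρ - ρ * H) +
    ∑ i, ∑ j, (γ i j : ℂ) •
      (jump Ng Ne i j * ρ * (jump Ng Ne i j)ᴴ -
        (1 / 2 : ℂ) • ((jump Ng Ne i j)ᴴ * jump Ng Ne i j * ρ +
          ρ * ((jump Ng Ne i j)ᴴ * jump Ng Ne i j)))

/-- A dark state: a density matrix annihilated by the Lindbladian and supported on the
ground-state subspace. -/
def IsDarkState (Ng Ne : ℕ) (H : Matrix (Fin Ng ⊕ Fin Ne) (Fin Ng ⊕ Fin Ne) ℂ)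
    (γ : Fin Ng → Fin Ne → ℝ) (ρ : Matrix (Fin Ng ⊕ Fin Ne) (Fin Ng ⊕ Fin Ne) ℂ) : Prop :=
  ρ.PosSemidef ∧ ρ.trace = 1 ∧ Lindblad Ng Ne H γ ρ = 0 ∧ ρ = Pg Ng Ne * ρ * Pg Ng Ne

section AuxLemmas

set_option linter.unusedSectionVars false

variable {m : Type*} [Fintype m] [DecidableEq m]

lemma aux_mul_vecMulVec (A : Matrix m m ℂ) (u v : m → ℂ) :
    A * vecMulVec u v = vecMulVec (A *ᵥ u) v := by
  ext a b
  simp only [Matrix.mul_apply, vecMulVec_apply, mulVec, dotProduct, Finset.sum_mul, mul_assoc]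

lemma aux_vecMulVec_mul (A : Matrix m m ℂ) (u v : m → ℂ) :
    vecMulVec u v * A = vecMulVec u (v ᵥ* A) := by
  ext a b
  simp only [Matrix.mul_apply, vecMulVec_apply, vecMul, dotProduct, Finset.mul_sum, mul_assoc]

lemma aux_zero_vecMulVec (v : m → ℂ) : vecMulVec (0 : m → ℂ) v = 0 := by
  ext a b; simp [vecMulVec_apply]

lemma aux_vecMulVec_zero (u : m → ℂ) : vecMulVec u (0 : m → ℂ) = 0 := by
  ext a b; simp [vecMulVec_apply]

lemma aux_smul_vecMulVec (c : ℂ) (u v : m → ℂ) :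
    vecMulVec (c • u) v = c • vecMulVec u v := by
  ext a b; simp [vecMulVec_apply, mul_assoc]

lemma aux_vecMulVec_smul (c : ℂ) (u v : m → ℂ) :
    vecMulVec u (c • v) = c • vecMulVec u v := by
  ext a b; simp [vecMulVec_apply]; ring

lemma aux_vecMulVec_mulVec (u v x : m → ℂ) :
    vecMulVec u v *ᵥ x = (v ⬝ᵥ x) • u := by
  ext a
  simp only [mulVec, dotProduct, vecMulVec_apply, Pi.smul_apply, smul_eq_mul]
  rw [Finset.sum_mul]
  exact Finset.sum_congr rfl fun b _ => by ring

lemma aux_sum_mulVec {ι : Type*} (s : Finset ι) (f : ι → Matrix m m ℂ) (v : m → ℂ) :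
    (∑ t ∈ s, f t) *ᵥ v = ∑ t ∈ s, f t *ᵥ v := by
  ext a
  simp only [mulVec, dotProduct, Finset.sum_apply, Matrix.sum_apply, Finset.sum_mul]
  exact Finset.sum_comm

lemma aux_vecMulVec_conjT (u : m → ℂ) : (vecMulVec u (star u))ᴴ = vecMulVec u (star u) := by
  ext a b
  simp only [conjTranspose_apply, vecMulVec_apply, Pi.star_apply, star_mul', star_star]
  ring

end AuxLemmas

section StructLemmas

variable (Ng Ne : ℕ)

lemma Pg_mul_Pg : Pg Ng Ne * Pg Ng Ne = Pg Ng Ne := by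
  have hv : (fun x => (Sum.elim (fun _ => (1:ℂ)) (fun _ => 0)) x *
      (Sum.elim (fun _ => (1:ℂ)) (fun _ => 0)) x)
      = (Sum.elim (fun _ => (1:ℂ)) (fun _ => 0) : Fin Ng ⊕ Fin Ne → ℂ) := by
    funext x; cases x <;> simp
  rw [Pg, diagonal_mul_diagonal, hv]

lemma Pg_herm : (Pg Ng Ne)ᴴ = Pg Ng Ne := by
  have hv : star (Sum.elim (fun _ => (1:ℂ)) (fun _ => 0) : Fin Ng ⊕ Fin Ne → ℂ)
      = Sum.elim (fun _ => (1:ℂ)) (fun _ => 0) := by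
    funext x; cases x <;> simp
  rw [Pg, diagonal_conjTranspose, hv]

lemma Qe_herm : (Qe Ng Ne)ᴴ = Qe Ng Ne := by
  rw [Qe, conjTranspose_sub, conjTranspose_one, Pg_herm]

lemma Qe_mul_Pg : Qe Ng Ne * Pg Ng Ne = 0 := by
  rw [Qe, sub_mul, one_mul, Pg_mul_Pg, sub_self]

lemma Pg_mul_Qe : Pg Ng Ne * Qe Ng Ne = 0 := by
  rw [Qe, mul_sub, mul_one, Pg_mul_Pg, sub_self]

lemma Pg_eq : Pg Ng Ne = 1 - Qe Ng Ne := by rw [Qe, sub_sub_cancel]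

lemma jump_mul_Pg (i : Fin Ng) (j : Fin Ne) : jump Ng Ne i j * Pg Ng Ne = 0 := by
  ext a b
  cases b with
  | inl k => simp [jump, Pg, Matrix.mul_diagonal]
  | inr k => simp [Pg, Matrix.mul_diagonal]

lemma jump_conjT_mul (i : Fin Ng) (j : Fin Ne) :
    (jump Ng Ne i j)ᴴ * jump Ng Ne i j
      = Matrix.single (Sum.inr j : Fin Ng ⊕ Fin Ne) (Sum.inr j : Fin Ng ⊕ Fin Ne) (1 : ℂ) := by
  rw [jump]
  rw [show ((Matrix.single (Sum.inl i : Fin Ng ⊕ Fin Ne) (Sum.inr j) (1:ℂ))ᴴ)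
      = Matrix.single (Sum.inr j) (Sum.inl i) 1 from by
    ext x y
    simp only [conjTranspose_apply, Matrix.single, of_apply]
    by_cases h1 : Sum.inl i = y <;> by_cases h2 : (Sum.inr j : Fin Ng ⊕ Fin Ne) = x <;>
      simp [h1, h2, and_comm]]
  rw [Matrix.single_mul_single_same,
    one_mul]

lemma Pg_mul_K (j : Fin Ne) :
    Pg Ng Ne * Matrix.single (Sum.inr j : Fin Ng ⊕ Fin Ne) (Sum.inr j : Fin Ng ⊕ Fin Ne) (1 : ℂ)
      = 0 := by
  ext a b
  cases a <;> simp [Pg, Matrix.diagonal_mul]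

lemma K_mul_Pg (j : Fin Ne) :
    Matrix.single (Sum.inr j : Fin Ng ⊕ Fin Ne) (Sum.inr j : Fin Ng ⊕ Fin Ne) (1 : ℂ) * Pg Ng Ne
      = 0 := by
  ext a b
  cases b <;> simp [Pg, Matrix.mul_diagonal]

lemma jump_mul_Qe (i : Fin Ng) (j : Fin Ne) : jump Ng Ne i j * Qe Ng Ne = jump Ng Ne i j := by
  rw [Qe, mul_sub, mul_one, jump_mul_Pg Ng Ne i j, sub_zero]

lemma Qe_mul_K (j : Fin Ne) :
    Qe Ng Ne * Matrix.single (Sum.inr j : Fin Ng ⊕ Fin Ne) (Sum.inr j : Fin Ng ⊕ Fin Ne) (1 : ℂ)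
      = Matrix.single (Sum.inr j : Fin Ng ⊕ Fin Ne) (Sum.inr j : Fin Ng ⊕ Fin Ne) (1 : ℂ) := by
  rw [Qe, sub_mul, one_mul, Pg_mul_K Ng Ne j, sub_zero]

lemma K_mul_Qe (j : Fin Ne) :
    Matrix.single (Sum.inr j : Fin Ng ⊕ Fin Ne) (Sum.inr j : Fin Ng ⊕ Fin Ne) (1 : ℂ) * Qe Ng Ne
      = Matrix.single (Sum.inr j : Fin Ng ⊕ Fin Ne) (Sum.inr j : Fin Ng ⊕ Fin Ne) (1 : ℂ) := by
  rw [Qe, mul_sub, mul_one, K_mul_Pg Ng Ne j, sub_zero]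

lemma lindblad_commutator (H : Matrix (Fin Ng ⊕ Fin Ne) (Fin Ng ⊕ Fin Ne) ℂ)
    (γ : Fin Ng → Fin Ne → ℝ) (ρ : Matrix (Fin Ng ⊕ Fin Ne) (Fin Ng ⊕ Fin Ne) ℂ)
    (hQρ : Qe Ng Ne * ρ = 0) (hρQ : ρ * Qe Ng Ne = 0) :
    Lindblad Ng Ne H γ ρ = (-Complex.I) • (H * ρ - ρ * H) := by
  have hz : ∀ (i : Fin Ng) (j : Fin Ne),
      jump Ng Ne i j * ρ * (jump Ng Ne i j)ᴴ -
        (1 / 2 : ℂ) • ((jump Ng Ne i j)ᴴ * jump Ng Ne i j * ρ +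
          ρ * ((jump Ng Ne i j)ᴴ * jump Ng Ne i j)) = 0 := by
    intro i j
    have h1 : jump Ng Ne i j * ρ = 0 := by
      rw [← jump_mul_Qe Ng Ne i j, mul_assoc, hQρ, mul_zero]
    have h2 : (jump Ng Ne i j)ᴴ * jump Ng Ne i j * ρ = 0 := by
      rw [jump_conjT_mul Ng Ne i j, ← K_mul_Qe Ng Ne j, mul_assoc, hQρ, mul_zero]
    have h3 : ρ * ((jump Ng Ne i j)ᴴ * jump Ng Ne i j) = 0 := by
      rw [jump_conjT_mul Ng Ne i j, ← Qe_mul_K Ng Ne j, ← mul_assoc, hρQ, zero_mul]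
    rw [h1, zero_mul, h2, h3, add_zero, smul_zero, sub_zero]
  rw [Lindblad]
  rw [Finset.sum_eq_zero, add_zero]
  intro i _
  rw [Finset.sum_eq_zero]
  intro j _
  rw [hz i j, smul_zero]

end StructLemmas
theorem dark_state_exists_iff_kernel_vector
    (Ng Ne : ℕ) (hNg : 1 ≤ Ng) (hNe : 1 ≤ Ne)
    (H : Matrix (Fin Ng ⊕ Fin Ne) (Fin Ng ⊕ Fin Ne) ℂ) (hH : H.IsHermitian)
    (γ : Fin Ng → Fin Ne → ℝ) (hγ : ∀ i j, 0 ≤ γ i j)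
    (hγpos : ∀ j, 0 < ∑ i, γ i j)
    (S : Type*) [Fintype S]
    (Ps : S → Matrix (Fin Ng ⊕ Fin Ne) (Fin Ng ⊕ Fin Ne) ℂ)
    (hPsHerm : ∀ s, (Ps s)ᴴ = Ps s)
    (hPsProj : ∀ s, Ps s * Ps s = Ps s)
    (hPsOrth : ∀ s t, s ≠ t → Ps s * Ps t = 0)
    (hPsSum : ∑ s, Ps s = Pg Ng Ne)
    (𝓔 : S → ℝ) (h𝓔 : Function.Injective 𝓔)
    (hspec : Pg Ng Ne * H * Pg Ng Ne = ∑ s, (𝓔 s : ℂ) • Ps s) :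
    ((∃ ρ : Matrix (Fin Ng ⊕ Fin Ne) (Fin Ng ⊕ Fin Ne) ℂ,
        IsDarkState Ng Ne H γ ρ) ↔
      (∃ (s : S) (ψ : Fin Ng ⊕ Fin Ne → ℂ), ψ ≠ 0 ∧ Ps s *ᵥ ψ = ψ ∧
        (Qe Ng Ne * H) *ᵥ ψ = 0)) ∧
    (∀ (s : S) (ψ : Fin Ng ⊕ Fin Ne → ℂ), ψ ≠ 0 → Ps s *ᵥ ψ = ψ →
      (Qe Ng Ne * H) *ᵥ ψ = 0 →
      IsDarkState Ng Ne H γ ((star ψ ⬝ᵥ ψ)⁻¹ • vecMulVec ψ (star ψ))) := by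
  have hPP := Pg_mul_Pg Ng Ne
  have hQP := Qe_mul_Pg Ng Ne
  have hPQ := Pg_mul_Qe Ng Ne
  have hPPs : ∀ t, Pg Ng Ne * Ps t = Ps t := by
    intro t
    rw [← hPsSum, Finset.sum_mul,
      Finset.sum_eq_single t (fun u _ hu => hPsOrth u t hu)
        (fun h => absurd (Finset.mem_univ t) h), hPsProj t]
  have hPsP : ∀ t, Ps t * Pg Ng Ne = Ps t := by
    intro t
    rw [← hPsSum, Finset.mul_sum,
      Finset.sum_eq_single t (fun u _ hu => hPsOrth t u (fun h => hu h.symm))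
        (fun h => absurd (Finset.mem_univ t) h), hPsProj t]
  have hPsK : ∀ t, Ps t * (Pg Ng Ne * H * Pg Ng Ne) = (𝓔 t : ℂ) • Ps t := by
    intro t
    rw [hspec, Finset.mul_sum]
    rw [Finset.sum_eq_single t
      (fun u _ hu => by rw [Matrix.mul_smul, hPsOrth t u (fun h => hu h.symm), smul_zero])
      (fun h => absurd (Finset.mem_univ t) h)]
    rw [Matrix.mul_smul, hPsProj t]
  have hKPs : ∀ t, (Pg Ng Ne * H * Pg Ng Ne) * Ps t = (𝓔 t : ℂ) • Ps t := by
    intro t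
    rw [hspec, Finset.sum_mul]
    rw [Finset.sum_eq_single t
      (fun u _ hu => by rw [Matrix.smul_mul, hPsOrth u t hu, smul_zero])
      (fun h => absurd (Finset.mem_univ t) h)]
    rw [Matrix.smul_mul, hPsProj t]
  -- Part 2: the explicit construction
  have key2 : ∀ (s : S) (ψ : Fin Ng ⊕ Fin Ne → ℂ), ψ ≠ 0 → Ps s *ᵥ ψ = ψ →
      (Qe Ng Ne * H) *ᵥ ψ = 0 →
      IsDarkState Ng Ne H γ ((star ψ ⬝ᵥ ψ)⁻¹ • vecMulVec ψ (star ψ)) := by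
    intro s ψ hψ hPsψ hQHψ
    have hd0 : star ψ ⬝ᵥ ψ ≠ 0 := fun h => hψ (dotProduct_star_self_eq_zero.mp h)
    have hdnn : (0 : ℂ) ≤ star ψ ⬝ᵥ ψ := dotProduct_star_self_nonneg ψ
    rw [Complex.le_def] at hdnn
    obtain ⟨hre, him⟩ := hdnn
    simp only [Complex.zero_re, Complex.zero_im] at hre him
    have hdr : star ψ ⬝ᵥ ψ = (((star ψ ⬝ᵥ ψ).re : ℝ) : ℂ) :=
      Complex.ext (by simp) (by simp [← him])
    have hinv : (star ψ ⬝ᵥ ψ)⁻¹ = (((star ψ ⬝ᵥ ψ).re⁻¹ : ℝ) : ℂ) := by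
      conv_lhs => rw [hdr]
      exact (Complex.ofReal_inv _).symm
    have hPψ : Pg Ng Ne *ᵥ ψ = ψ := by
      conv_lhs => rw [← hPsψ]
      rw [mulVec_mulVec, hPPs s, hPsψ]
    have hQψ : Qe Ng Ne *ᵥ ψ = 0 := by
      rw [Qe, sub_mulVec, one_mulVec, hPψ, sub_self]
    have hPtψ : ∀ t, t ≠ s → Ps t *ᵥ ψ = 0 := by
      intro t ht
      conv_lhs => rw [← hPsψ]
      rw [mulVec_mulVec, hPsOrth t s ht, zero_mulVec]
    have hQHψ' : Qe Ng Ne *ᵥ (H *ᵥ ψ) = 0 := by rw [mulVec_mulVec]; exact hQHψ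
    have hPHψ : Pg Ng Ne *ᵥ (H *ᵥ ψ) = H *ᵥ ψ := by
      rw [Pg_eq, sub_mulVec, one_mulVec, hQHψ', sub_zero]
    have hHψ : H *ᵥ ψ = (𝓔 s : ℂ) • ψ := by
      calc H *ᵥ ψ = Pg Ng Ne *ᵥ (H *ᵥ (Pg Ng Ne *ᵥ ψ)) := by rw [hPψ, hPHψ]
        _ = (Pg Ng Ne * H * Pg Ng Ne) *ᵥ ψ := by rw [mulVec_mulVec, mulVec_mulVec]
        _ = (∑ t, (𝓔 t : ℂ) • Ps t) *ᵥ ψ := by rw [hspec]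
        _ = ∑ t, ((𝓔 t : ℂ) • Ps t) *ᵥ ψ := aux_sum_mulVec _ _ _
        _ = (𝓔 s : ℂ) • ψ := by
            rw [Finset.sum_eq_single s
              (fun t _ ht => by rw [smul_mulVec, hPtψ t ht, smul_zero])
              (fun h => absurd (Finset.mem_univ s) h)]
            rw [smul_mulVec, hPsψ]
    have hQM : Qe Ng Ne * vecMulVec ψ (star ψ) = 0 := by
      rw [aux_mul_vecMulVec, hQψ, aux_zero_vecMulVec]
    have hstarQ : star ψ ᵥ* Qe Ng Ne = 0 := by
      rw [← Qe_herm, ← star_mulVec, hQψ, star_zero]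
    have hMQ : vecMulVec ψ (star ψ) * Qe Ng Ne = 0 := by
      rw [aux_vecMulVec_mul, hstarQ, aux_vecMulVec_zero]
    have hPM : Pg Ng Ne * vecMulVec ψ (star ψ) = vecMulVec ψ (star ψ) := by
      rw [aux_mul_vecMulVec, hPψ]
    have hstarP : star ψ ᵥ* Pg Ng Ne = star ψ := by
      rw [← Pg_herm, ← star_mulVec, hPψ]
    have hMP : vecMulVec ψ (star ψ) * Pg Ng Ne = vecMulVec ψ (star ψ) := by
      rw [aux_vecMulVec_mul, hstarP]
    have hHM : H * vecMulVec ψ (star ψ) = (𝓔 s : ℂ) • vecMulVec ψ (star ψ) := by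
      rw [aux_mul_vecMulVec, hHψ, aux_smul_vecMulVec]
    have hstarH : star ψ ᵥ* H = (𝓔 s : ℂ) • star ψ := by
      rw [← hH.eq, ← star_mulVec, hHψ, star_smul, Complex.star_def, Complex.conj_ofReal]
    have hMHm : vecMulVec ψ (star ψ) * H = (𝓔 s : ℂ) • vecMulVec ψ (star ψ) := by
      rw [aux_vecMulVec_mul, hstarH, aux_vecMulVec_smul]
    refine ⟨posSemidef_iff_dotProduct_mulVec.mpr ⟨?_, ?_⟩, ?_, ?_, ?_⟩
    · -- Hermitian
      show ((star ψ ⬝ᵥ ψ)⁻¹ • vecMulVec ψ (star ψ))ᴴ = _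
      rw [conjTranspose_smul, aux_vecMulVec_conjT, hinv, Complex.star_def, Complex.conj_ofReal]
    · -- nonneg quadratic form
      intro x
      rw [smul_mulVec, aux_vecMulVec_mulVec]
      rw [dotProduct_smul, dotProduct_smul]
      have hx : star x ⬝ᵥ ψ = star (star ψ ⬝ᵥ x) := by
        rw [star_dotProduct]
      rw [hx, hinv, smul_eq_mul, smul_eq_mul, Complex.star_def, Complex.mul_conj,
        ← Complex.ofReal_mul]
      rw [Complex.zero_le_real]
      exact mul_nonneg (inv_nonneg.mpr hre) (Complex.normSq_nonneg _)
    · -- trace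
      rw [trace_smul, smul_eq_mul]
      have htrM : (vecMulVec ψ (star ψ)).trace = star ψ ⬝ᵥ ψ := by
        simp [Matrix.trace, Matrix.diag, vecMulVec_apply, dotProduct, mul_comm]
      rw [htrM, inv_mul_cancel₀ hd0]
    · -- Lindblad vanishes
      have hQρ : Qe Ng Ne * ((star ψ ⬝ᵥ ψ)⁻¹ • vecMulVec ψ (star ψ)) = 0 := by
        rw [Matrix.mul_smul, hQM, smul_zero]
      have hρQ : ((star ψ ⬝ᵥ ψ)⁻¹ • vecMulVec ψ (star ψ)) * Qe Ng Ne = 0 := by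
        rw [Matrix.smul_mul, hMQ, smul_zero]
      rw [lindblad_commutator Ng Ne H γ _ hQρ hρQ]
      have hz : H * ((star ψ ⬝ᵥ ψ)⁻¹ • vecMulVec ψ (star ψ)) -
          ((star ψ ⬝ᵥ ψ)⁻¹ • vecMulVec ψ (star ψ)) * H = 0 := by
        rw [Matrix.mul_smul, Matrix.smul_mul, hHM, hMHm, sub_self]
      rw [hz, smul_zero]
    · -- support
      rw [Matrix.mul_smul, Matrix.smul_mul, hPM, hMP]
  refine ⟨⟨?_, fun ⟨s, ψ, h1, h2, h3⟩ => ⟨_, key2 s ψ h1 h2 h3⟩⟩, key2⟩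
  -- Forward direction
  rintro ⟨ρ, hPSD, htr, hL, hsupp⟩
  have hPρ : Pg Ng Ne * ρ = ρ := by
    rw [hsupp, ← mul_assoc, ← mul_assoc, hPP]
  have hρP : ρ * Pg Ng Ne = ρ := by
    rw [hsupp, mul_assoc, hPP]
  have hQρ : Qe Ng Ne * ρ = 0 := by
    rw [← hPρ, ← mul_assoc, hQP, zero_mul]
  have hρQ : ρ * Qe Ng Ne = 0 := by
    rw [← hρP, mul_assoc, hPQ, mul_zero]
  rw [lindblad_commutator Ng Ne H γ ρ hQρ hρQ] at hL
  have hcomm : H * ρ = ρ * H := by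
    have h0 : H * ρ - ρ * H = 0 := by
      rcases smul_eq_zero.mp hL with h | h
      · exact absurd h (by simp [Complex.I_ne_zero])
      · exact h
    exact sub_eq_zero.mp h0
  have hQHρ : (Qe Ng Ne * H) * ρ = 0 := by
    rw [mul_assoc, hcomm, ← mul_assoc, hQρ, zero_mul]
  have h1 : (Pg Ng Ne * H * Pg Ng Ne) * ρ = ρ * H := by
    calc (Pg Ng Ne * H * Pg Ng Ne) * ρ
        = Pg Ng Ne * H * (Pg Ng Ne * ρ) := by rw [mul_assoc (Pg Ng Ne * H)]
      _ = Pg Ng Ne * (H * ρ) := by rw [hPρ, mul_assoc]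
      _ = Pg Ng Ne * (ρ * H) := by rw [hcomm]
      _ = (Pg Ng Ne * ρ) * H := by rw [mul_assoc]
      _ = ρ * H := by rw [hPρ]
  have h2 : ρ * (Pg Ng Ne * H * Pg Ng Ne) = ρ * H := by
    calc ρ * (Pg Ng Ne * H * Pg Ng Ne)
        = ρ * (Pg Ng Ne * H) * Pg Ng Ne := by rw [← mul_assoc]
      _ = ρ * Pg Ng Ne * H * Pg Ng Ne := by rw [← mul_assoc ρ (Pg Ng Ne) H]
      _ = ρ * H * Pg Ng Ne := by rw [hρP]
      _ = H * ρ * Pg Ng Ne := by rw [hcomm]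
      _ = H * (ρ * Pg Ng Ne) := by rw [mul_assoc]
      _ = H * ρ := by rw [hρP]
      _ = ρ * H := hcomm
  have hKcomm : (Pg Ng Ne * H * Pg Ng Ne) * ρ = ρ * (Pg Ng Ne * H * Pg Ng Ne) :=
    h1.trans h2.symm
  have hcross : ∀ t u, t ≠ u → Ps t * ρ * Ps u = 0 := by
    intro t u htu
    have key : (𝓔 t : ℂ) • (Ps t * ρ * Ps u) = (𝓔 u : ℂ) • (Ps t * ρ * Ps u) := by
      calc (𝓔 t : ℂ) • (Ps t * ρ * Ps u)
          = ((𝓔 t : ℂ) • Ps t) * ρ * Ps u := by rw [Matrix.smul_mul, Matrix.smul_mul]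
        _ = Ps t * (Pg Ng Ne * H * Pg Ng Ne) * ρ * Ps u := by rw [hPsK t]
        _ = Ps t * ((Pg Ng Ne * H * Pg Ng Ne) * ρ) * Ps u := by
            rw [mul_assoc (Ps t) (Pg Ng Ne * H * Pg Ng Ne) ρ]
        _ = Ps t * (ρ * (Pg Ng Ne * H * Pg Ng Ne)) * Ps u := by rw [hKcomm]
        _ = Ps t * ρ * ((Pg Ng Ne * H * Pg Ng Ne) * Ps u) := by
            rw [← mul_assoc (Ps t) ρ (Pg Ng Ne * H * Pg Ng Ne),
              mul_assoc (Ps t * ρ) (Pg Ng Ne * H * Pg Ng Ne) (Ps u)]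
        _ = Ps t * ρ * ((𝓔 u : ℂ) • Ps u) := by rw [hKPs u]
        _ = (𝓔 u : ℂ) • (Ps t * ρ * Ps u) := by rw [Matrix.mul_smul]
    have hne : (𝓔 t : ℂ) - (𝓔 u : ℂ) ≠ 0 := by
      rw [sub_ne_zero]
      intro h
      exact htu (h𝓔 (by exact_mod_cast h))
    have hz : ((𝓔 t : ℂ) - (𝓔 u : ℂ)) • (Ps t * ρ * Ps u) = 0 := by
      rw [sub_smul, key, sub_self]
    exact (smul_eq_zero.mp hz).resolve_left hne
  have hρPs : ∀ t, ρ * Ps t = Ps t * ρ * Ps t := by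
    intro t
    calc ρ * Ps t = (Pg Ng Ne * ρ) * Ps t := by rw [hPρ]
      _ = ((∑ u, Ps u) * ρ) * Ps t := by rw [hPsSum]
      _ = ∑ u, Ps u * ρ * Ps t := by rw [Finset.sum_mul, Finset.sum_mul]
      _ = Ps t * ρ * Ps t := Finset.sum_eq_single t (fun u _ hu => hcross u t hu)
          (fun h => absurd (Finset.mem_univ t) h)
  have hexists : ∃ t, ρ * Ps t ≠ 0 := by
    by_contra h
    push_neg at h
    have hρ0 : ρ = 0 := by
      calc ρ = ρ * Pg Ng Ne := hρP.symm
        _ = ρ * ∑ u, Ps u := by rw [hPsSum]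
        _ = ∑ u, ρ * Ps u := by rw [Finset.mul_sum]
        _ = 0 := Finset.sum_eq_zero fun u _ => h u
    rw [hρ0] at htr
    simp at htr
  obtain ⟨t, hMne⟩ := hexists
  obtain ⟨a, b, hab⟩ : ∃ a b, (ρ * Ps t) a b ≠ 0 := by
    by_contra h
    push_neg at h
    exact hMne (by ext a b; simpa using h a b)
  refine ⟨t, (ρ * Ps t) *ᵥ Pi.single b 1, ?_, ?_, ?_⟩
  · intro h0
    apply hab
    have := congrFun h0 a
    simpa [Matrix.mulVec_single] using this
  · rw [mulVec_mulVec]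
    congr 1
    rw [hρPs t, ← mul_assoc, ← mul_assoc, hPsProj t]
  · rw [mulVec_mulVec]
    have hz : (Qe Ng Ne * H) * (ρ * Ps t) = 0 := by
      rw [← mul_assoc, hQHρ, zero_mul]
    rw [hz, zero_mulVec]
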